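/- Let g be an orthogonal transformation of a finite-dimensional real vector space N with inner product, such that g has no nonzero fixed vectors, and let S be a g-invariant symmetric bilinear form on N that is nondegenerate. Decompose N = ⊕_j N^{β_j} into the isotypic components where g acts with eigenvalues e^{±iβ_j}, 0 < β_j ≤ π distinct. Then this decomposition is orthogonal with respect to S, and for each j with β_j ≠ π, both the number of positive and the number of negative eigenvalues of S restricted to N^{β_j} are even. -/

import Mathlib

/-- Number of negative squares (index) of a symmetric bilinear form restricted to a
submodule `p`: the maximal dimension of a subspace of `p` on which it is negative
definite. -/
noncomputable def bilinNegIndex {V : Type*} [AddCommGroup V] [Module ℝ V]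
    (S : LinearMap.BilinForm ℝ V) (p : Submodule ℝ V) : ℕ :=
  sSup {k | ∃ q : Submodule ℝ V, q ≤ p ∧ Module.finrank ℝ q = k ∧
      ∀ x ∈ q, x ≠ 0 → S x x < 0}

/-- Number of positive squares of a symmetric bilinear form restricted to `p`. -/
noncomputable def bilinPosIndex {V : Type*} [AddCommGroup V] [Module ℝ V]
    (S : LinearMap.BilinForm ℝ V) (p : Submodule ℝ V) : ℕ :=
  sSup {k | ∃ q : Submodule ℝ V, q ≤ p ∧ Module.finrank ℝ q = k ∧
      ∀ x ∈ q, x ≠ 0 → 0 < S x x}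

open Submodule Module

local notation "⟪" x ", " y "⟫" => @inner ℝ _ _ x y

section Aux

/-- The operator representing a bilinear form via the inner product. -/
noncomputable def reprOp {V : Type*} [NormedAddCommGroup V] [InnerProductSpace ℝ V]
    [FiniteDimensional ℝ V] (F : V →ₗ[ℝ] V →ₗ[ℝ] ℝ) : V →ₗ[ℝ] V where
  toFun x := (InnerProductSpace.toDual ℝ V).symm (LinearMap.toContinuousLinearMap (F x))
  map_add' x y := by simp [map_add]
  map_smul' c x := by simp

theorem inner_reprOp {V : Type*} [NormedAddCommGroup V] [InnerProductSpace ℝ V]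
    [FiniteDimensional ℝ V] (F : V →ₗ[ℝ] V →ₗ[ℝ] ℝ) (x y : V) :
    ⟪reprOp F x, y⟫ = F x y := by
  simp [reprOp, InnerProductSpace.toDual_symm_apply]

theorem core_even {V : Type*} [NormedAddCommGroup V] [InnerProductSpace ℝ V]
    [FiniteDimensional ℝ V]
    (A J : V →ₗ[ℝ] V) (hA : A.IsSymmetric)
    (hJJ : ∀ x, J (J x) = -x)
    (hJskew : ∀ x y, ⟪J x, y⟫ = -⟪x, J y⟫)
    (hcomm : ∀ x, A (J x) = J (A x)) :
    Even (sSup {k | ∃ q : Submodule ℝ V, Module.finrank ℝ q = k ∧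
        ∀ x ∈ q, x ≠ 0 → 0 < ⟪A x, x⟫}) := by
  classical
  set n := Module.finrank ℝ V with hnn
  have hn : Module.finrank ℝ V = n := rfl
  set b := hA.eigenvectorBasis hn with hb
  set μ := hA.eigenvalues hn with hμ
  have heig : ∀ i, A (b i) = μ i • b i := fun i => by
    have := hA.apply_eigenvectorBasis hn i
    exact_mod_cast this
  -- coordinates of A x
  have h_coord : ∀ (x : V) (i : Fin n), ⟪b i, A x⟫ = μ i * ⟪b i, x⟫ := by
    intro x i
    rw [← hA (b i) x, heig i, real_inner_smul_left]
  have h_sum : ∀ x : V, ⟪A x, x⟫ = ∑ i, μ i * (⟪b i, x⟫ * ⟪b i, x⟫) := by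
    intro x
    rw [← b.repr.inner_map_map (A x) x]
    rw [PiLp.inner_apply]
    refine Finset.sum_congr rfl fun i _ => ?_
    rw [OrthonormalBasis.repr_apply_apply, OrthonormalBasis.repr_apply_apply]
    simp only [RCLike.inner_apply, starRingEnd_apply, star_trivial]
    rw [h_coord]
    ring
  -- vanishing of coordinates outside the spanning set
  have h_vanish : ∀ (Ip : Set (Fin n)) (x : V), x ∈ span ℝ (b '' Ip) →
      ∀ i, i ∉ Ip → ⟪b i, x⟫ = 0 := by
    intro Ip x hx i hi
    induction hx using Submodule.span_induction with
    | mem z hz =>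
      obtain ⟨j, hj, rfl⟩ := hz
      exact b.orthonormal.2 (fun h : i = j => hi (h ▸ hj))
    | zero => exact inner_zero_right _
    | add y z _ _ hy hz => rw [inner_add_right, hy, hz]; ring
    | smul c y _ hy => rw [real_inner_smul_right, hy]; ring
  have h_mem_span : ∀ (Ip : Set (Fin n)) (x : V), (∀ i, i ∉ Ip → ⟪b i, x⟫ = 0) →
      x ∈ span ℝ (b '' Ip) := by
    intro Ip x hx
    rw [← b.sum_repr x]
    refine Submodule.sum_mem _ fun i _ => ?_
    by_cases hi : i ∈ Ip
    · exact Submodule.smul_mem _ _ (subset_span ⟨i, hi, rfl⟩)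
    · rw [b.repr_apply_apply, hx i hi]
      simp
  -- eigenvector orthogonal to spans of other eigenvectors
  have h_orth : ∀ (u : V) (ν : ℝ), A u = ν • u → ∀ (Ip : Set (Fin n)),
      (∀ j ∈ Ip, μ j ≠ ν) → ∀ x ∈ span ℝ (b '' Ip), ⟪u, x⟫ = 0 := by
    intro u ν hu Ip hIp x hx
    induction hx using Submodule.span_induction with
    | mem z hz =>
      obtain ⟨j, hj, rfl⟩ := hz
      have h1 : ν * ⟪u, b j⟫ = μ j * ⟪u, b j⟫ := by
        calc ν * ⟪u, b j⟫ = ⟪ν • u, b j⟫ := (real_inner_smul_left _ _ _).symm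
        _ = ⟪A u, b j⟫ := by rw [hu]
        _ = ⟪u, A (b j)⟫ := hA u (b j)
        _ = μ j * ⟪u, b j⟫ := by rw [heig, real_inner_smul_right]
      have h2 : (ν - μ j) * ⟪u, b j⟫ = 0 := by linarith
      rcases mul_eq_zero.mp h2 with h | h
      · exact absurd (by linarith : μ j = ν) (hIp j hj)
      · exact h
    | zero => exact inner_zero_right _
    | add y z _ _ hy hz => rw [inner_add_right, hy, hz]; ring
    | smul c y _ hy => rw [real_inner_smul_right, hy]; ring
  set Ip : Set (Fin n) := {i | 0 < μ i} with hIp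
  set E : Submodule ℝ V := span ℝ (b '' Ip) with hE
  haveI : Fintype ↥Ip := Fintype.ofFinite _
  -- positive definiteness on E
  have h_pos : ∀ x ∈ E, x ≠ 0 → 0 < ⟪A x, x⟫ := by
    intro x hx hx0
    rw [h_sum]
    have hex : ∃ i, ⟪b i, x⟫ ≠ 0 := by
      by_contra hc
      push_neg at hc
      apply hx0
      rw [← b.sum_repr x]
      simp only [b.repr_apply_apply]
      simp [hc]
    obtain ⟨i, hi⟩ := hex
    have hiIp : i ∈ Ip := by
      by_contra hiI
      exact hi (h_vanish Ip x hx i hiI)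
    refine Finset.sum_pos' (fun j _ => ?_) ⟨i, Finset.mem_univ i, ?_⟩
    · by_cases hj : j ∈ Ip
      · exact mul_nonneg (le_of_lt hj) (mul_self_nonneg _)
      · rw [h_vanish Ip x hx j hj]; ring_nf; exact le_refl 0
    · exact mul_pos hiIp (mul_self_pos.mpr hi)
  -- J-invariance of E
  have h_JE : ∀ x ∈ E, J x ∈ E := by
    intro x hx
    apply h_mem_span
    intro i hi
    have hJb : A (J (b i)) = μ i • J (b i) := by
      rw [hcomm, heig, map_smul]
    have h0 : ⟪J (b i), x⟫ = 0 := by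
      apply h_orth (J (b i)) (μ i) hJb Ip (fun j hj => ?_) x hx
      have h1 : 0 < μ j := hj
      have h2 : ¬ (0 < μ i) := hi
      intro he; rw [he] at h1; exact h2 h1
    have := hJskew (b i) x
    rw [← neg_eq_zero, ← this, h0]
  -- evenness of dim E via the complex structure J
  have h_even : Even (Module.finrank ℝ E) := by
    set f : E →ₗ[ℝ] E := J.restrict h_JE with hf
    have hff : f ∘ₗ f = -LinearMap.id := by
      ext z
      have : (f (f z) : V) = J (J (z : V)) := by
        simp [hf, LinearMap.restrict_coe_apply]
      simp only [LinearMap.comp_apply, LinearMap.neg_apply, LinearMap.id_apply]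
      rw [this, hJJ]
      simp
    have hdet : LinearMap.det f * LinearMap.det f = (-1 : ℝ) ^ Module.finrank ℝ E := by
      rw [← LinearMap.det_comp, hff]
      have : (-LinearMap.id : E →ₗ[ℝ] E) = (-1 : ℝ) • LinearMap.id := by
        ext z; simp
      rw [this, LinearMap.det_smul, LinearMap.det_id, mul_one]
    rcases Nat.even_or_odd (Module.finrank ℝ E) with h | h
    · exact h
    · exfalso
      rw [h.neg_one_pow] at hdet
      nlinarith [mul_self_nonneg (LinearMap.det f)]
  -- dimension of E
  have h_card : Module.finrank ℝ E = Fintype.card ↥Ip := by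
    rw [hE, Set.image_eq_range]
    exact finrank_span_eq_card
      (b.orthonormal.linearIndependent.comp _ Subtype.coe_injective)
  -- upper bound
  have h_bound : ∀ k ∈ {k | ∃ q : Submodule ℝ V, Module.finrank ℝ q = k ∧
      ∀ x ∈ q, x ≠ 0 → 0 < ⟪A x, x⟫}, k ≤ Module.finrank ℝ E := by
    rintro k ⟨q, hqk, hqpos⟩
    let π : V →ₗ[ℝ] (↥Ip → ℝ) :=
      { toFun := fun x i => ⟪b ↑i, x⟫
        map_add' := fun x y => by funext i; exact inner_add_right _ _ _
        map_smul' := fun c x => by funext i; exact real_inner_smul_right _ _ _ }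
    have hinj : Function.Injective (π.comp q.subtype) := by
      rw [← LinearMap.ker_eq_bot]
      rw [eq_bot_iff]
      rintro ⟨x, hxq⟩ hx
      simp only [LinearMap.mem_ker, LinearMap.comp_apply, Submodule.subtype_apply] at hx
      have hcoord : ∀ i : Fin n, i ∈ Ip → ⟪b i, x⟫ = 0 := by
        intro i hi
        exact congrFun hx ⟨i, hi⟩
      have hnonpos : ⟪A x, x⟫ ≤ 0 := by
        rw [h_sum]
        refine Finset.sum_nonpos fun i _ => ?_
        by_cases hi : i ∈ Ip
        · rw [hcoord i hi]; ring_nf; exact le_refl 0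
        · have : μ i ≤ 0 := le_of_not_gt hi
          exact mul_nonpos_of_nonpos_of_nonneg this (mul_self_nonneg _)
      have hx0 : x = 0 := by
        by_contra hc
        exact absurd (hqpos x hxq hc) (not_lt.mpr hnonpos)
      simp only [Submodule.mem_bot]
      exact Subtype.ext hx0
    calc k = Module.finrank ℝ q := hqk.symm
    _ ≤ Module.finrank ℝ (↥Ip → ℝ) := LinearMap.finrank_le_finrank_of_injective hinj
    _ = Fintype.card ↥Ip := Module.finrank_fintype_fun_eq_card ℝ
    _ = Module.finrank ℝ E := h_card.symm
  have h_mem : Module.finrank ℝ E ∈ {k | ∃ q : Submodule ℝ V, Module.finrank ℝ q = k ∧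
      ∀ x ∈ q, x ≠ 0 → 0 < ⟪A x, x⟫} := ⟨E, rfl, h_pos⟩
  have hsup : sSup {k | ∃ q : Submodule ℝ V, Module.finrank ℝ q = k ∧
      ∀ x ∈ q, x ≠ 0 → 0 < ⟪A x, x⟫} = Module.finrank ℝ E :=
    le_antisymm (csSup_le ⟨_, h_mem⟩ h_bound)
      (le_csSup ⟨Module.finrank ℝ E, h_bound⟩ h_mem)
  rw [hsup]
  exact h_even

end Aux

/-- let g be an orthogonal transformation of a finite-dimensional real
inner product space N with no nonzero fixed vectors, and S a g-invariant nondegenerate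
symmetric bilinear form.  If N = ⊕_j N^{β_j} is the isotypic decomposition where g acts
on N^{β_j} with (complexified) eigenvalues e^{±iβ_j}, the β_j ∈ (0, π] pairwise distinct
(expressed by g² - 2cos(β_j) g + 1 = 0 on N^{β_j}), then the decomposition is
S-orthogonal, and for β_j ≠ π both the positive and the negative index of S|_{N^{β_j}}
are even. -/
theorem stmt_11 (N : Type*) [NormedAddCommGroup N] [InnerProductSpace ℝ N]
    [FiniteDimensional ℝ N]
    (g : N ≃ₗᵢ[ℝ] N) (hfix : ∀ x : N, g x = x → x = 0)
    (S : LinearMap.BilinForm ℝ N) (hsymm : S.IsSymm) (hnd : S.Nondegenerate)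
    (hinv : ∀ u v, S (g u) (g v) = S u v)
    (ι : Type*) [Fintype ι] [DecidableEq ι] (β : ι → ℝ)
    (hβ : ∀ j, 0 < β j ∧ β j ≤ Real.pi) (hβinj : Function.Injective β)
    (Nc : ι → Submodule ℝ N)
    (hNg : ∀ j, ∀ x ∈ Nc j, g x ∈ Nc j)
    (hmin : ∀ j, ∀ x ∈ Nc j, g (g x) - (2 * Real.cos (β j)) • g x + x = 0)
    (hint : DirectSum.IsInternal Nc) :
    (∀ j k, j ≠ k → ∀ u ∈ Nc j, ∀ v ∈ Nc k, S u v = 0) ∧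
    (∀ j, β j ≠ Real.pi →
      Even (bilinPosIndex S (Nc j)) ∧ Even (bilinNegIndex S (Nc j))) := by
  -- g (g w) in terms of g w and w on each component
  have hgg : ∀ l, ∀ w ∈ Nc l, g (g w) = (2 * Real.cos (β l)) • g w - w := by
    intro l w hw
    have h := hmin l w hw
    linear_combination (norm := module) h
  -- g has a retraction on each component
  have hret : ∀ l, ∀ w ∈ Nc l, g ((2 * Real.cos (β l)) • w - g w) = w := by
    intro l w hw
    rw [map_sub, map_smul, hgg l w hw]
    abel
  have hcos : ∀ j k, j ≠ k → Real.cos (β j) ≠ Real.cos (β k) := by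
    intro j k hjk h
    exact hjk (hβinj (Real.injOn_cos ⟨(hβ j).1.le, (hβ j).2⟩ ⟨(hβ k).1.le, (hβ k).2⟩ h))
  constructor
  · -- part 1 : S-orthogonality
    intro j k hjk u hu v hv
    have e1 : S (g u) v = (2 * Real.cos (β k)) * S u v - S u (g v) := by
      calc S (g u) v = S (g u) (g ((2 * Real.cos (β k)) • v - g v)) := by rw [hret k v hv]
        _ = S u ((2 * Real.cos (β k)) • v - g v) := hinv u _
        _ = (2 * Real.cos (β k)) * S u v - S u (g v) := by
            simp [map_sub, map_smul, smul_eq_mul]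
    have e2 : (2 * Real.cos (β j)) * S u v - S (g u) v = S u (g v) := by
      have h2 : S ((2 * Real.cos (β j)) • u - g u) v = S u (g v) := by
        calc S ((2 * Real.cos (β j)) • u - g u) v
            = S (g ((2 * Real.cos (β j)) • u - g u)) (g v) := (hinv _ v).symm
          _ = S u (g v) := by rw [hret j u hu]
      rw [← h2]
      simp [map_sub, map_smul, LinearMap.sub_apply, LinearMap.smul_apply, smul_eq_mul]
    have h3 : (2 * Real.cos (β j) - 2 * Real.cos (β k)) * S u v = 0 := by ring_nf; nlinarith [e1, e2]
    rcases mul_eq_zero.mp h3 with h | h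
    · exact absurd (by linarith : Real.cos (β j) = Real.cos (β k)) (hcos j k hjk)
    · exact h
  · -- part 2 : evenness of the indices
    intro j hπ
    have hβ0 := (hβ j).1
    have hβlt : β j < Real.pi := lt_of_le_of_ne (hβ j).2 hπ
    set c := Real.cos (β j) with hcdef
    set s := Real.sin (β j) with hsdef
    have hs : 0 < s := Real.sin_pos_of_pos_of_lt_pi hβ0 hβlt
    have hs2 : s ^ 2 + c ^ 2 = 1 := Real.sin_sq_add_cos_sq _
    set P := Nc j with hP
    let Jm : N →ₗ[ℝ] N :=
      { toFun := fun x => s⁻¹ • (g x - c • x)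
        map_add' := fun x y => by rw [map_add]; module
        map_smul' := fun a x => by
          rw [map_smul]; simp only [RingHom.id_apply]; module }
    have hJapp : ∀ x : N, Jm x = s⁻¹ • (g x - c • x) := fun _ => rfl
    have hJmem : ∀ x ∈ P, Jm x ∈ P := fun x hx =>
      Submodule.smul_mem _ _ (Submodule.sub_mem _ (hNg j x hx) (Submodule.smul_mem _ _ hx))
    have hggc : ∀ w ∈ P, g (g w) = (2 * c) • g w - w := fun w hw => hgg j w hw
    have hretc : ∀ w ∈ P, g ((2 * c) • w - g w) = w := fun w hw => hret j w hw
    have hJJ : ∀ x ∈ P, Jm (Jm x) = -x := by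
      intro x hx
      rw [hJapp, hJapp, map_smul, map_sub, map_smul, hggc x hx]
      match_scalars <;> field_simp <;> nlinarith [hs2]
    have hgS : ∀ (x : N), ∀ y ∈ P, S (g x) y = (2 * c) * S x y - S x (g y) := by
      intro x y hy
      calc S (g x) y = S (g x) (g ((2 * c) • y - g y)) := by rw [hretc y hy]
        _ = S x ((2 * c) • y - g y) := hinv x _
        _ = (2 * c) * S x y - S x (g y) := by simp [map_sub, map_smul, smul_eq_mul]
    have hgI : ∀ (x : N), ∀ y ∈ P, ⟪g x, y⟫ = (2 * c) * ⟪x, y⟫ - ⟪x, g y⟫ := by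
      intro x y hy
      calc ⟪g x, y⟫ = ⟪g x, g ((2 * c) • y - g y)⟫ := by rw [hretc y hy]
        _ = ⟪x, (2 * c) • y - g y⟫ := g.inner_map_map x _
        _ = (2 * c) * ⟪x, y⟫ - ⟪x, g y⟫ := by
            rw [inner_sub_right, real_inner_smul_right]
    have hSskew : ∀ (x : N), ∀ y ∈ P, S (Jm x) y = -S x (Jm y) := by
      intro x y hy
      simp only [hJapp, map_smul, map_sub, LinearMap.smul_apply, LinearMap.sub_apply,
        smul_eq_mul]
      rw [hgS x y hy]
      ring
    have hIskew : ∀ (x : N), ∀ y ∈ P, ⟪Jm x, y⟫ = -⟪x, Jm y⟫ := by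
      intro x y hy
      simp only [hJapp, real_inner_smul_left, real_inner_smul_right, inner_sub_left,
        inner_sub_right]
      rw [hgI x y hy]
      ring
    -- move to the subspace P
    set AP : ↥P →ₗ[ℝ] ↥P := reprOp (S.compl₁₂ P.subtype P.subtype) with hAP
    have hkey : ∀ x y : ↥P, ⟪AP x, y⟫ = S x.1 y.1 := fun x y => by
      rw [hAP, inner_reprOp, LinearMap.compl₁₂_apply, Submodule.subtype_apply,
        Submodule.subtype_apply]
    have hAsymm : AP.IsSymmetric := by
      intro x y
      rw [hkey, real_inner_comm, hkey]
      simpa using hsymm.eq x.1 y.1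
    set JP : ↥P →ₗ[ℝ] ↥P := Jm.restrict hJmem with hJP
    have hJPcoe : ∀ x : ↥P, (JP x : N) = Jm x := fun x => rfl
    have hJJV : ∀ x : ↥P, JP (JP x) = -x := by
      intro x
      apply Subtype.ext
      rw [Submodule.coe_neg, hJPcoe, hJPcoe]
      exact hJJ x.1 x.2
    have hJskewV : ∀ x y : ↥P, ⟪JP x, y⟫ = -⟪x, JP y⟫ := by
      intro x y
      rw [Submodule.coe_inner, Submodule.coe_inner, hJPcoe, hJPcoe]
      exact hIskew x.1 y.1 y.2
    have hcommV : ∀ x : ↥P, AP (JP x) = JP (AP x) := by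
      intro x
      apply ext_inner_right ℝ
      intro y
      rw [hkey, hJskewV (AP x) y, hkey, hJPcoe, hJPcoe]
      exact hSskew x.1 y.1 y.2
    constructor
    · -- positive index
      have hset : {k | ∃ q : Submodule ℝ N, q ≤ P ∧ Module.finrank ℝ q = k ∧
          ∀ x ∈ q, x ≠ 0 → 0 < S x x}
          = {k | ∃ q : Submodule ℝ ↥P, Module.finrank ℝ q = k ∧
              ∀ x ∈ q, x ≠ 0 → 0 < ⟪AP x, x⟫} := by
        ext k
        constructor
        · rintro ⟨q, hqP, hqk, hqpos⟩
          refine ⟨q.comap P.subtype, ?_, ?_⟩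
          · rw [← hqk]
            exact LinearEquiv.finrank_eq (Submodule.comapSubtypeEquivOfLe hqP)
          · intro x hx hx0
            rw [hkey]
            exact hqpos x.1 (Submodule.mem_comap.mp hx) (fun h => hx0 (Subtype.ext h))
        · rintro ⟨q, hqk, hqpos⟩
          refine ⟨q.map P.subtype, Submodule.map_subtype_le P q, ?_, ?_⟩
          · rw [← hqk]
            exact Submodule.finrank_map_subtype_eq P q
          · rintro x hx hx0
            obtain ⟨y, hy, rfl⟩ := Submodule.mem_map.mp hx
            have hy0 : y ≠ 0 := fun h => hx0 (by rw [h]; rfl)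
            have := hqpos y hy hy0
            rwa [hkey] at this
      unfold bilinPosIndex
      rw [hset]
      exact core_even AP JP hAsymm hJJV hJskewV hcommV
    · -- negative index
      have hAsymm' : (-AP).IsSymmetric := by
        intro x y
        simp only [LinearMap.neg_apply, inner_neg_left, inner_neg_right]
        rw [hAsymm x y]
      have hcommV' : ∀ x : ↥P, (-AP) (JP x) = JP ((-AP) x) := by
        intro x
        simp only [LinearMap.neg_apply, map_neg, hcommV x]
      have hset : {k | ∃ q : Submodule ℝ N, q ≤ P ∧ Module.finrank ℝ q = k ∧
          ∀ x ∈ q, x ≠ 0 → S x x < 0}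
          = {k | ∃ q : Submodule ℝ ↥P, Module.finrank ℝ q = k ∧
              ∀ x ∈ q, x ≠ 0 → 0 < ⟪(-AP) x, x⟫} := by
        ext k
        constructor
        · rintro ⟨q, hqP, hqk, hqpos⟩
          refine ⟨q.comap P.subtype, ?_, ?_⟩
          · rw [← hqk]
            exact LinearEquiv.finrank_eq (Submodule.comapSubtypeEquivOfLe hqP)
          · intro x hx hx0
            rw [LinearMap.neg_apply, inner_neg_left, hkey]
            have := hqpos x.1 (Submodule.mem_comap.mp hx) (fun h => hx0 (Subtype.ext h))
            linarith
        · rintro ⟨q, hqk, hqpos⟩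
          refine ⟨q.map P.subtype, Submodule.map_subtype_le P q, ?_, ?_⟩
          · rw [← hqk]
            exact Submodule.finrank_map_subtype_eq P q
          · rintro x hx hx0
            obtain ⟨y, hy, rfl⟩ := Submodule.mem_map.mp hx
            have hy0 : y ≠ 0 := fun h => hx0 (by rw [h]; rfl)
            have := hqpos y hy hy0
            rw [LinearMap.neg_apply, inner_neg_left, hkey] at this
            simp only [Submodule.subtype_apply]
            linarith
      unfold bilinNegIndex
      rw [hset]
      exact core_even (-AP) JP hAsymm' hJJV hJskewV hcommV'
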